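/- Let (A, B) be an exact 3-separation of a matroid M″ extended with a guts line L (so ⊓(A, L) = ⊓(B, L) = 2). If A′ ⊆ A and B′ ⊆ B satisfy ⊓(A′, B′) = 2, then ⊓(A′ ∪ B′, L) = 2. -/

import Mathlib

open Set

variable {α : Type*}

/-- The rank of a set in a matroid: the supremum of cardinalities of independent subsets. -/
noncomputable def mRk (M : Matroid α) (X : Set α) : ℕ :=
  sSup (Set.ncard '' {I | M.Indep I ∧ I ⊆ X})

/-- Local connectivity `⊓(S, T) = r(S) + r(T) − r(S ∪ T)`. -/
noncomputable def mConn (M : Matroid α) (S T : Set α) : ℤ :=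
  (mRk M S : ℤ) + (mRk M T : ℤ) - (mRk M (S ∪ T) : ℤ)

/-- A circuit: a minimal dependent set. -/
def mCircuit (M : Matroid α) (C : Set α) : Prop :=
  M.Dep C ∧ ∀ D, D ⊂ C → ¬ M.Dep D

/-- `M'` is a single-element extension of `M` by the element `p`:
`p` is a new element, the ground set grows by `p`, and deleting `p` recovers `M`. -/
def ExtBy (M' M : Matroid α) (p : α) : Prop :=
  p ∉ M.E ∧ M'.E = insert p M.E ∧ M'.restrict M.E = M

/-- `M'` is an extension of `M` by the two new elements `x` and `y`. -/
def ExtBy2 (M' M : Matroid α) (x y : α) : Prop :=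
  x ∉ M.E ∧ y ∉ M.E ∧ x ≠ y ∧ M'.E = insert x (insert y M.E) ∧ M'.restrict M.E = M

/-- `(A, B)` is an exact 3-separation of `M`: a partition of the ground set with
`r(A) + r(B) − r(M) = 2`. -/
def Exact3Sep (M : Matroid α) (A B : Set α) : Prop :=
  Disjoint A B ∧ A ∪ B = M.E ∧
    (mRk M A : ℤ) + (mRk M B : ℤ) - (mRk M M.E : ℤ) = 2

/-- An `A`-strand relative to the separation `(A, B)`: a minimal subset `S` of `A` with
`⊓(S, B) = 1`. -/
def Strand (M : Matroid α) (A B S : Set α) : Prop :=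
  S ⊆ A ∧ mConn M S B = 1 ∧ ∀ S', S' ⊂ S → mConn M S' B ≠ 1

section RankHelpers

variable {M : Matroid α} {W X Y Z U I J : Set α}

/-- Extended (`ℕ∞`-valued) rank of a set. -/
noncomputable def eRk (M : Matroid α) (X : Set α) : ℕ∞ :=
  ⨆ I ∈ {I : Set α | M.Indep I ∧ I ⊆ X}, I.encard

lemma le_eRk (hI : M.Indep I) (hIX : I ⊆ X) : I.encard ≤ eRk M X :=
  le_biSup _ (⟨hI, hIX⟩ : I ∈ {I : Set α | M.Indep I ∧ I ⊆ X})

lemma eRk_le {n : ℕ∞} (h : ∀ I, M.Indep I → I ⊆ X → I.encard ≤ n) : eRk M X ≤ n :=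
  iSup₂_le fun I hI => h I hI.1 hI.2

lemma basis'_eRk (hI : M.IsBasis' I X) : eRk M X = I.encard := by
  refine le_antisymm (eRk_le fun J hJ hJX => ?_) (le_eRk hI.indep hI.subset)
  obtain ⟨J', hJ', hJJ'⟩ := hJ.subset_isBasis'_of_subset hJX
  exact (Set.encard_mono hJJ').trans_eq (hJ'.encard_eq_encard hI)

lemma eRk_mono (h : X ⊆ Y) : eRk M X ≤ eRk M Y :=
  eRk_le fun I hI hIX => le_eRk hI (hIX.trans h)

lemma eRk_submod (M : Matroid α) (X Y : Set α) :
    eRk M (X ∪ Y) + eRk M (X ∩ Y) ≤ eRk M X + eRk M Y := by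
  obtain ⟨I, hI⟩ := M.exists_isBasis' (X ∩ Y)
  obtain ⟨J, hJ, hIJ⟩ := hI.indep.subset_isBasis'_of_subset
    (hI.subset.trans (inter_subset_left.trans subset_union_left))
  have hJu : J ∩ X ∪ J ∩ Y = J := by
    rw [← inter_union_distrib_left, inter_eq_self_of_subset_left hJ.subset]
  have hJi : (J ∩ X) ∩ (J ∩ Y) = J ∩ (X ∩ Y) := by
    ext a; simp only [mem_inter_iff]; tauto
  have key : (J ∩ X).encard + (J ∩ Y).encard = J.encard + (J ∩ (X ∩ Y)).encard := by
    rw [← Set.encard_union_add_encard_inter, hJu, hJi]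
  have h1 : eRk M (X ∪ Y) + eRk M (X ∩ Y) ≤ J.encard + (J ∩ (X ∩ Y)).encard := by
    rw [basis'_eRk hJ, basis'_eRk hI]
    exact add_le_add le_rfl (Set.encard_mono (subset_inter hIJ hI.subset))
  refine h1.trans ?_
  rw [← key]
  exact add_le_add (le_eRk (hJ.indep.subset inter_subset_left) inter_subset_right)
    (le_eRk (hJ.indep.subset inter_subset_left) inter_subset_right)

lemma eRk_union_le (M : Matroid α) (X Y : Set α) : eRk M (X ∪ Y) ≤ eRk M X + eRk M Y :=
  le_trans le_self_add (eRk_submod M X Y)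

lemma mRk_eq_of_eRk {n : ℕ} (h : eRk M X = n) : mRk M X = n := by
  obtain ⟨I, hI⟩ := M.exists_isBasis' X
  have hIe : I.encard = n := by rw [← basis'_eRk hI, h]
  have hIfin : I.Finite := Set.finite_of_encard_eq_coe hIe
  have hIn : I.ncard = n := by
    have h2 := hIfin.cast_ncard_eq
    rw [hIe] at h2; exact_mod_cast h2
  have hub : ∀ m ∈ Set.ncard '' {I : Set α | M.Indep I ∧ I ⊆ X}, m ≤ n := by
    rintro m ⟨J, ⟨hJ, hJX⟩, rfl⟩
    have hle : J.encard ≤ (n : ℕ∞) := (le_eRk hJ hJX).trans_eq h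
    have hJfin : J.Finite :=
      Set.encard_ne_top_iff.mp (hle.trans_lt (WithTop.coe_lt_top n)).ne
    rw [← hJfin.cast_ncard_eq] at hle
    exact_mod_cast hle
  have hmem : n ∈ Set.ncard '' {I : Set α | M.Indep I ∧ I ⊆ X} :=
    ⟨I, ⟨hI.indep, hI.subset⟩, hIn⟩
  exact le_antisymm (csSup_le ⟨n, hmem⟩ hub) (le_csSup ⟨n, hub⟩ hmem)

lemma mRk_eq_zero_of_top (h : eRk M X = ⊤) : mRk M X = 0 := by
  obtain ⟨I, hI⟩ := M.exists_isBasis' X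
  have hIinf : I.Infinite := by
    rw [← Set.encard_eq_top_iff, ← basis'_eRk hI, h]
  have hnb : ¬ BddAbove (Set.ncard '' {I : Set α | M.Indep I ∧ I ⊆ X}) := by
    rintro ⟨m, hm⟩
    obtain ⟨J, hJI, hJfin, hJcard⟩ := hIinf.exists_subset_ncard_eq (m + 1)
    have : m + 1 ≤ m := hm ⟨J, ⟨hI.indep.subset hJI, hJI.trans hI.subset⟩, hJcard⟩
    omega
  have h2 : mRk M X = sSup (∅ : Set ℕ) := csSup_of_not_bddAbove hnb
  simpa using h2

lemma eRk_eq_mRk (h : eRk M X ≠ ⊤) : eRk M X = (mRk M X : ℕ∞) := by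
  obtain ⟨n, hn⟩ := WithTop.ne_top_iff_exists.mp h
  rw [← hn, mRk_eq_of_eRk hn.symm]
  rfl

lemma mRk_mono_fin (hXY : X ⊆ Y) (hfin : eRk M Y ≠ ⊤) : mRk M X ≤ mRk M Y := by
  have hX : eRk M X ≠ ⊤ := fun h0 => hfin (top_le_iff.mp (h0 ▸ eRk_mono hXY))
  have h1 := eRk_mono (M := M) hXY
  rw [eRk_eq_mRk hX, eRk_eq_mRk hfin] at h1
  exact_mod_cast h1

lemma mRk_submod_fin (hZX : Z ⊆ X) (hZY : Z ⊆ Y) (hU : X ∪ Y = U)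
    (hfin : eRk M U ≠ ⊤) : mRk M U + mRk M Z ≤ mRk M X + mRk M Y := by
  subst hU
  have hXf : eRk M X ≠ ⊤ := fun h0 => hfin (top_le_iff.mp (h0 ▸ eRk_mono subset_union_left))
  have hYf : eRk M Y ≠ ⊤ := fun h0 => hfin (top_le_iff.mp (h0 ▸ eRk_mono subset_union_right))
  have hZf : eRk M Z ≠ ⊤ := fun h0 => hXf (top_le_iff.mp (h0 ▸ eRk_mono hZX))
  have h1 : eRk M (X ∪ Y) + eRk M Z ≤ eRk M X + eRk M Y :=
    le_trans (add_le_add le_rfl (eRk_mono (subset_inter hZX hZY))) (eRk_submod M X Y)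
  rw [eRk_eq_mRk hfin, eRk_eq_mRk hXf, eRk_eq_mRk hYf, eRk_eq_mRk hZf] at h1
  exact_mod_cast h1

end RankHelpers

set_option maxHeartbeats 2000000 in
/-- If `A' ⊆ A`, `B' ⊆ B` and `⊓(A', B') = 2`, then `⊓(A' ∪ B', L) = 2`. -/
theorem conn_two_spans_guts (M : Matroid α) (A B : Set α) (x : α) (L : Set α)
    (hAB : Disjoint A B) (hxL : x ∈ L)
    (hx : x ∈ M.closure A ∩ M.closure B) (hrL : mRk M L = 2)
    (hconnAL : mConn M A L = 2) (hconnBL : mConn M B L = 2) (hconnAB : mConn M A B = 2)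
    (A' B' : Set α) (hA' : A' ⊆ A) (hB' : B' ⊆ B) (h : mConn M A' B' = 2) :
    mConn M (A' ∪ B') L = 2 := by
  unfold mConn at hconnAL hconnBL hconnAB h ⊢
  have heLne : eRk M L ≠ ⊤ := by
    intro htop
    have h0 := mRk_eq_zero_of_top htop
    omega
  -- Case: `A' ∪ B'` has infinite rank
  rcases eq_or_ne (eRk M (A' ∪ B')) ⊤ with hABtop | hABfin
  · have h1 := mRk_eq_zero_of_top hABtop
    have h2 : mRk M (A' ∪ B' ∪ L) = 0 :=
      mRk_eq_zero_of_top (top_le_iff.mp (hABtop ▸ eRk_mono (subset_union_left)))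
    rw [h1, h2, hrL]; norm_num
  -- Now `A' ∪ B'` has finite rank.
  have hA'B'Lfin : eRk M (A' ∪ B' ∪ L) ≠ ⊤ := by
    intro h0
    exact (WithTop.add_ne_top.mpr ⟨hABfin, heLne⟩)
      (top_le_iff.mp (h0 ▸ eRk_union_le M (A' ∪ B') L))
  have hfB' : mRk M B' ≤ mRk M (A' ∪ B') := mRk_mono_fin subset_union_right hABfin
  have hfA' : mRk M A' ≤ mRk M (A' ∪ B') := mRk_mono_fin subset_union_left hABfin
  have hmon7 : mRk M (A' ∪ B') ≤ mRk M (A' ∪ B' ∪ L) :=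
    mRk_mono_fin subset_union_left hA'B'Lfin
  rcases eq_or_ne (eRk M A) ⊤ with hAtop | hAfin
  · -- `A` infinite rank
    have hrA := mRk_eq_zero_of_top hAtop
    have hrAB : mRk M (A ∪ B) = 0 :=
      mRk_eq_zero_of_top (top_le_iff.mp (hAtop ▸ eRk_mono (subset_union_left)))
    rcases eq_or_ne (eRk M B) ⊤ with hBtop | hBfin
    · have hrB := mRk_eq_zero_of_top hBtop
      omega
    · -- `B` has finite rank (necessarily 2) and spans `L`
      have hBLfin : eRk M (B ∪ L) ≠ ⊤ := by
        intro h0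
        exact (WithTop.add_ne_top.mpr ⟨hBfin, heLne⟩)
          (top_le_iff.mp (h0 ▸ eRk_union_le M B L))
      have f1 : mRk M B' ≤ mRk M B := mRk_mono_fin hB' hBfin
      have f3 : mRk M (B ∪ L) + mRk M B' ≤ mRk M (B' ∪ L) + mRk M B :=
        mRk_submod_fin (Z := B') subset_union_left hB'
          (by ext a; simp only [Set.mem_union]; have := @hB' a; tauto) hBLfin
      have f4 : mRk M (B' ∪ L) ≤ mRk M (B ∪ L) :=
        mRk_mono_fin (union_subset_union_left L hB') hBLfin
      have f5 : mRk M (A' ∪ B' ∪ L) + mRk M B' ≤ mRk M (A' ∪ B') + mRk M (B' ∪ L) :=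
        mRk_submod_fin (Z := B') subset_union_right subset_union_left
          (by ext a; simp only [Set.mem_union]; tauto) hA'B'Lfin
      omega
  rcases eq_or_ne (eRk M B) ⊤ with hBtop | hBfin
  · -- `B` infinite rank, `A` finite (necessarily rank 2, spanning `L`)
    have hrB := mRk_eq_zero_of_top hBtop
    have hrAB : mRk M (A ∪ B) = 0 :=
      mRk_eq_zero_of_top (top_le_iff.mp (hBtop ▸ eRk_mono (subset_union_right)))
    have hALfin : eRk M (A ∪ L) ≠ ⊤ := by
      intro h0
      exact (WithTop.add_ne_top.mpr ⟨hAfin, heLne⟩)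
        (top_le_iff.mp (h0 ▸ eRk_union_le M A L))
    have g1 : mRk M A' ≤ mRk M A := mRk_mono_fin hA' hAfin
    have g3 : mRk M (A ∪ L) + mRk M A' ≤ mRk M (A' ∪ L) + mRk M A :=
      mRk_submod_fin (Z := A') subset_union_left hA'
        (by ext a; simp only [Set.mem_union]; have := @hA' a; tauto) hALfin
    have g4 : mRk M (A' ∪ L) ≤ mRk M (A ∪ L) :=
      mRk_mono_fin (union_subset_union_left L hA') hALfin
    have g5 : mRk M (A' ∪ B' ∪ L) + mRk M A' ≤ mRk M (A' ∪ B') + mRk M (A' ∪ L) :=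
      mRk_submod_fin (Z := A') subset_union_left (subset_union_left)
        (by ext a; simp only [Set.mem_union]; tauto) hA'B'Lfin
    omega
  -- Main case: both `A` and `B` have finite rank.
  have hWfin : eRk M (A ∪ B ∪ L) ≠ ⊤ := by
    intro h0
    have hABf : eRk M (A ∪ B) ≠ ⊤ := by
      intro h1
      exact (WithTop.add_ne_top.mpr ⟨hAfin, hBfin⟩)
        (top_le_iff.mp (h1 ▸ eRk_union_le M A B))
    exact (WithTop.add_ne_top.mpr ⟨hABf, heLne⟩)
      (top_le_iff.mp (h0 ▸ eRk_union_le M (A ∪ B) L))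
  have hsub : ∀ {S : Set α}, S ⊆ A ∪ B ∪ L → eRk M S ≠ ⊤ := fun hS h0 =>
    hWfin (top_le_iff.mp (h0 ▸ eRk_mono hS))
  have memtac : ∀ a : α, (a ∈ A' → a ∈ A) ∧ (a ∈ B' → a ∈ B) := fun a => ⟨@hA' a, @hB' a⟩
  have S1 : mRk M (A' ∪ B) + mRk M B' ≤ mRk M (A' ∪ B') + mRk M B :=
    mRk_submod_fin (Z := B') subset_union_right hB'
      (by ext a; simp only [Set.mem_union]; have := memtac a; tauto)
      (hsub (by intro a ha; simp only [Set.mem_union] at *; have := memtac a; tauto))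
  have S2 : mRk M (A ∪ B) + mRk M A' ≤ mRk M A + mRk M (A' ∪ B) :=
    mRk_submod_fin (Z := A') hA' subset_union_left
      (by ext a; simp only [Set.mem_union]; have := memtac a; tauto)
      (hsub (by intro a ha; simp only [Set.mem_union] at *; have := memtac a; tauto))
  have S3 : mRk M (A' ∪ B ∪ L) + mRk M B ≤ mRk M (A' ∪ B) + mRk M (B ∪ L) :=
    mRk_submod_fin (Z := B) subset_union_right subset_union_left
      (by ext a; simp only [Set.mem_union]; tauto)
      (hsub (by intro a ha; simp only [Set.mem_union] at *; have := memtac a; tauto))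
  have m3 : mRk M (A' ∪ B) ≤ mRk M (A' ∪ B ∪ L) :=
    mRk_mono_fin subset_union_left
      (hsub (by intro a ha; simp only [Set.mem_union] at *; have := memtac a; tauto))
  have S4 : mRk M (A' ∪ B ∪ L) + mRk M L ≤ mRk M (B ∪ L) + mRk M (A' ∪ L) :=
    mRk_submod_fin (Z := L) subset_union_right subset_union_right
      (by ext a; simp only [Set.mem_union]; tauto)
      (hsub (by intro a ha; simp only [Set.mem_union] at *; have := memtac a; tauto))
  have S5 : mRk M (A ∪ B ∪ L) + mRk M (A' ∪ L) ≤ mRk M (A ∪ L) + mRk M (A' ∪ B ∪ L) :=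
    mRk_submod_fin (Z := A' ∪ L) (union_subset_union_left L hA')
      (union_subset_union_left L subset_union_left)
      (by ext a; simp only [Set.mem_union]; have := memtac a; tauto) hWfin
  have S6 : mRk M (A ∪ B ∪ L) + mRk M B ≤ mRk M (A ∪ B) + mRk M (B ∪ L) :=
    mRk_submod_fin (Z := B) subset_union_right subset_union_left
      (by ext a; simp only [Set.mem_union]; tauto) hWfin
  have m6 : mRk M (A ∪ B) ≤ mRk M (A ∪ B ∪ L) :=
    mRk_mono_fin subset_union_left hWfin
  have T1 : mRk M (A ∪ B') + mRk M A' ≤ mRk M (A' ∪ B') + mRk M A :=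
    mRk_submod_fin (Z := A') subset_union_left hA'
      (by ext a; simp only [Set.mem_union]; have := memtac a; tauto)
      (hsub (by intro a ha; simp only [Set.mem_union] at *; have := memtac a; tauto))
  have T2 : mRk M (A ∪ B) + mRk M B' ≤ mRk M B + mRk M (A ∪ B') :=
    mRk_submod_fin (Z := B') hB' subset_union_right
      (by ext a; simp only [Set.mem_union]; have := memtac a; tauto)
      (hsub (by intro a ha; simp only [Set.mem_union] at *; have := memtac a; tauto))
  have T3 : mRk M (A ∪ B' ∪ L) + mRk M A ≤ mRk M (A ∪ B') + mRk M (A ∪ L) :=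
    mRk_submod_fin (Z := A) subset_union_left subset_union_left
      (by ext a; simp only [Set.mem_union]; tauto)
      (hsub (by intro a ha; simp only [Set.mem_union] at *; have := memtac a; tauto))
  have m3' : mRk M (A ∪ B') ≤ mRk M (A ∪ B' ∪ L) :=
    mRk_mono_fin subset_union_left
      (hsub (by intro a ha; simp only [Set.mem_union] at *; have := memtac a; tauto))
  have T4 : mRk M (A ∪ B' ∪ L) + mRk M L ≤ mRk M (A ∪ L) + mRk M (B' ∪ L) :=
    mRk_submod_fin (Z := L) subset_union_right subset_union_right
      (by ext a; simp only [Set.mem_union]; tauto)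
      (hsub (by intro a ha; simp only [Set.mem_union] at *; have := memtac a; tauto))
  have T5 : mRk M (A ∪ B ∪ L) + mRk M (B' ∪ L) ≤ mRk M (B ∪ L) + mRk M (A ∪ B' ∪ L) :=
    mRk_submod_fin (Z := B' ∪ L) (union_subset_union_left L hB')
      (union_subset_union_left L subset_union_right)
      (by ext a; simp only [Set.mem_union]; have := memtac a; tauto) hWfin
  have S7 : mRk M (A' ∪ B' ∪ L) + mRk M L ≤ mRk M (A' ∪ L) + mRk M (B' ∪ L) :=
    mRk_submod_fin (Z := L) subset_union_right subset_union_right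
      (by ext a; simp only [Set.mem_union]; tauto) hA'B'Lfin
  omega
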